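/- Let p ≥ 1 and q be integers with p² + 4q > 0 and p² + 2q − 2 < p·√(p² + 4q), set α = (p + √(p² + 4q))/2, β = (p − √(p² + 4q))/2, let a, b be integers with c₁ = (b − aβ)/(α − β) > 0, and define Wₙ = c₁αⁿ − c₂βⁿ where c₂ = (b − aα)/(α − β). Let m, t ≥ 1 be integers. Then lim_{n→∞} [ (Σ_{k=n}^{∞} 1/(Σ_{i=0}^{t} W_{mk+i}))^{−1} − (1/(α − 1))·(W_{mn+t+1} − W_{mn} − W_{m(n−1)+t+1} + W_{m(n−1)}) ] = 0. -/

import Mathlib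

open Filter

set_option maxHeartbeats 1000000 in

lemma core_tendsto (A B x y : ℝ) (hA : 0 < A) (hx : 1 < x) (hy : |y| < 1) :
    Tendsto (fun n : ℕ => (∑' k : ℕ, 1 / (A * x ^ (n + k) - B * y ^ (n + k)))⁻¹
      - A * (1 - x⁻¹) * x ^ n) atTop (nhds 0) := by
  have hx0 : (0:ℝ) < x := lt_trans one_pos hx
  have hxi : x⁻¹ < 1 := inv_lt_one_of_one_lt₀ hx
  have hxi0 : (0:ℝ) ≤ x⁻¹ := by positivity
  have h1xi : 0 < 1 - x⁻¹ := by linarith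
  set ρ : ℝ := |y| / x ^ 2 with hρdef
  have hρ0 : 0 ≤ ρ := by positivity
  have hx2 : (1:ℝ) < x ^ 2 := one_lt_pow₀ hx two_ne_zero
  have hρ1 : ρ < 1 := by
    rw [hρdef, div_lt_one (by positivity)]
    exact lt_trans hy hx2
  have hρx2 : ρ * x ^ 2 = |y| := by
    rw [hρdef, div_mul_cancel₀ _ (by positivity)]
  have hρx : ρ * x < 1 := by
    have : ρ * x = |y| / x := by rw [hρdef]; field_simp
    rw [this, div_lt_one hx0]
    exact lt_trans hy hx
  have hρx0 : 0 ≤ ρ * x := by positivity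
  -- choose N beyond which A*x^j ≥ 2|B|
  obtain ⟨N, hN⟩ := Filter.eventually_atTop.mp
    (((tendsto_pow_atTop_atTop_of_one_lt hx).const_mul_atTop hA).eventually_ge_atTop (2 * |B|))
  set C : ℕ → ℝ := fun j => A * x ^ j - B * y ^ j with hCdef
  have hBy : ∀ j : ℕ, |B * y ^ j| ≤ |B| := by
    intro j
    rw [abs_mul, abs_pow]
    calc |B| * |y| ^ j ≤ |B| * 1 := by
          have := pow_le_one₀ (abs_nonneg y) hy.le (n := j)
          exact mul_le_mul_of_nonneg_left this (abs_nonneg B)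
      _ = |B| := mul_one _
  have hCl : ∀ j, N ≤ j → A / 2 * x ^ j ≤ C j := by
    intro j hj
    have h2 := hN j hj
    have h3 := hBy j
    have h4 : B * y ^ j ≤ |B * y ^ j| := le_abs_self _
    simp only [hCdef]
    nlinarith
  have hCpos : ∀ j, N ≤ j → 0 < C j := by
    intro j hj
    exact lt_of_lt_of_le (by positivity) (hCl j hj)
  -- per term bound
  set K : ℝ := 2 * |B| / A ^ 2 with hKdef
  have hK0 : 0 ≤ K := by positivity
  have hterm : ∀ j, N ≤ j → |1 / C j - 1 / (A * x ^ j)| ≤ K * ρ ^ j := by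
    intro j hj
    have hCj := hCpos j hj
    have hAx : (0:ℝ) < A * x ^ j := by positivity
    have e1 : 1 / C j - 1 / (A * x ^ j) = B * y ^ j / (C j * (A * x ^ j)) := by
      rw [div_sub_div _ _ hCj.ne' hAx.ne']
      congr 1
      rw [hCdef]
      ring
    rw [e1, abs_div, abs_of_pos (by positivity : (0:ℝ) < C j * (A * x ^ j))]
    have hden : A / 2 * x ^ j * (A * x ^ j) ≤ C j * (A * x ^ j) :=
      mul_le_mul_of_nonneg_right (hCl j hj) hAx.le
    have hnum : |B * y ^ j| = |B| * |y| ^ j := by rw [abs_mul, abs_pow]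
    calc |B * y ^ j| / (C j * (A * x ^ j))
        ≤ |B * y ^ j| / (A / 2 * x ^ j * (A * x ^ j)) := by
          apply div_le_div_of_nonneg_left (abs_nonneg _) (by positivity) hden
      _ = K * ρ ^ j := by
          rw [hnum, hKdef, hρdef, div_pow, ← pow_mul]
          rw [show x ^ (2 * j) = x ^ j * x ^ j by rw [two_mul, pow_add]]
          field_simp
  -- summabilities and tail identity, for n ≥ N
  have hgeo_sum : ∀ n : ℕ, Summable (fun k : ℕ => 1 / (A * x ^ (n + k))) := by
    intro n
    apply Summable.congr ((summable_geometric_of_lt_one hxi0 hxi).mul_left (1 / (A * x ^ n)))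
    intro k
    rw [pow_add, inv_pow]
    field_simp
  have hgeo_val : ∀ n : ℕ, (∑' k : ℕ, 1 / (A * x ^ (n + k)))
      = (x⁻¹) ^ n / (A * (1 - x⁻¹)) := by
    intro n
    have : (fun k : ℕ => 1 / (A * x ^ (n + k))) = fun k => (1 / (A * x ^ n)) * (x⁻¹) ^ k := by
      funext k
      rw [pow_add, inv_pow]
      field_simp
    rw [this, tsum_mul_left, tsum_geometric_of_lt_one hxi0 hxi]
    rw [inv_pow]
    field_simp
  have hErr : ∀ n, N ≤ n →
      Summable (fun k : ℕ => 1 / C (n + k)) ∧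
      |(∑' k : ℕ, 1 / C (n + k)) - (x⁻¹) ^ n / (A * (1 - x⁻¹))|
        ≤ K * (1 - ρ)⁻¹ * ρ ^ n := by
    intro n hn
    have hjk : ∀ k : ℕ, N ≤ n + k := fun k => le_trans hn (Nat.le_add_right n k)
    have hbound : ∀ k : ℕ, |1 / C (n + k) - 1 / (A * x ^ (n + k))| ≤ (K * ρ ^ n) * ρ ^ k := by
      intro k
      have h := hterm (n + k) (hjk k)
      rw [show K * ρ ^ n * ρ ^ k = K * ρ ^ (n + k) from by rw [pow_add]; ring]
      exact h
    have hsb : Summable (fun k : ℕ => (K * ρ ^ n) * ρ ^ k) :=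
      (summable_geometric_of_lt_one hρ0 hρ1).mul_left _
    have hdiffsum : Summable (fun k : ℕ => 1 / C (n + k) - 1 / (A * x ^ (n + k))) :=
      Summable.of_norm_bounded hsb (fun k => hbound k)
    have hsum : Summable (fun k : ℕ => 1 / C (n + k)) := by
      have := hdiffsum.add (hgeo_sum n)
      apply this.congr
      intro k; ring
    refine ⟨hsum, ?_⟩
    have habs : Summable (fun k : ℕ => |1 / C (n + k) - 1 / (A * x ^ (n + k))|) :=
      Summable.of_nonneg_of_le (fun k => abs_nonneg _) hbound hsb
    have e2 : (∑' k : ℕ, 1 / C (n + k)) - (x⁻¹) ^ n / (A * (1 - x⁻¹))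
        = ∑' k : ℕ, (1 / C (n + k) - 1 / (A * x ^ (n + k))) := by
      rw [Summable.tsum_sub hsum (hgeo_sum n), hgeo_val n]
    rw [e2]
    have hstep1 : |∑' k : ℕ, (1 / C (n + k) - 1 / (A * x ^ (n + k)))|
        ≤ ∑' k : ℕ, |1 / C (n + k) - 1 / (A * x ^ (n + k))| := by
      have h1 := norm_tsum_le_tsum_norm
        (f := fun k : ℕ => 1 / C (n + k) - 1 / (A * x ^ (n + k)))
        (by simpa [Real.norm_eq_abs] using habs)
      simpa [Real.norm_eq_abs] using h1
    calc |∑' k : ℕ, (1 / C (n + k) - 1 / (A * x ^ (n + k)))|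
        ≤ ∑' k : ℕ, |1 / C (n + k) - 1 / (A * x ^ (n + k))| := hstep1
      _ ≤ ∑' k : ℕ, (K * ρ ^ n) * ρ ^ k :=
          Summable.tsum_le_tsum (fun k => hbound k) habs hsb
      _ = (K * ρ ^ n) * (1 - ρ)⁻¹ := by
          rw [tsum_mul_left, tsum_geometric_of_lt_one hρ0 hρ1]
      _ = K * (1 - ρ)⁻¹ * ρ ^ n := by ring
  -- final squeeze
  set D : ℝ := A * (1 - x⁻¹) with hDdef
  have hD0 : 0 < D := by positivity
  set K₂ : ℝ := K * (1 - ρ)⁻¹ with hK₂def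
  have hK₂0 : 0 ≤ K₂ := mul_nonneg hK0 (inv_nonneg.mpr (by linarith))
  -- eventually K₂ ρ^n ≤ (1/2) * (x⁻¹)^n / D
  have hsmall : ∀ᶠ n : ℕ in atTop, K₂ * ρ ^ n ≤ (1/2) * ((x⁻¹) ^ n / D) := by
    have htend : Tendsto (fun n : ℕ => (2 * D * K₂) * (ρ * x) ^ n) atTop (nhds 0) := by
      have := tendsto_pow_atTop_nhds_zero_of_abs_lt_one
        (r := ρ * x) (by rwa [abs_of_nonneg hρx0])
      simpa using this.const_mul (2 * D * K₂)
    have h1 : ∀ᶠ n : ℕ in atTop, (2 * D * K₂) * (ρ * x) ^ n ≤ 1 := by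
      have := htend.eventually (eventually_le_nhds (by norm_num : (0:ℝ) < 1))
      exact this
    filter_upwards [h1] with n h
    have hxn : (0:ℝ) < x ^ n := by positivity
    have hmp : (ρ * x) ^ n = ρ ^ n * x ^ n := mul_pow ρ x n
    rw [show (1/2:ℝ) * ((x⁻¹) ^ n / D) = 1 / (2 * D * x ^ n) by
      rw [inv_pow]; field_simp]
    rw [le_div_iff₀ (by positivity)]
    calc K₂ * ρ ^ n * (2 * D * x ^ n) = 2 * D * K₂ * (ρ ^ n * x ^ n) := by ring
      _ = 2 * D * K₂ * (ρ * x) ^ n := by rw [hmp]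
      _ ≤ 1 := h
  -- conclude
  have hCgoal : ∀ n k : ℕ, A * x ^ (n + k) - B * y ^ (n + k) = C (n + k) := fun _ _ => rfl
  apply squeeze_zero_norm' (a := fun n => (2 * K₂ * D ^ 2) * |y| ^ n)
  · filter_upwards [hsmall, eventually_ge_atTop N] with n hs hn
    obtain ⟨hsum, hE⟩ := hErr n hn
    simp only [hCgoal]
    set T : ℝ := ∑' k : ℕ, 1 / C (n + k) with hTdef
    set G : ℝ := (x⁻¹) ^ n / D with hGdef
    have hG0 : 0 < G := div_pos (pow_pos (by positivity) n) hD0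
    have hGhalf : K₂ * ρ ^ n ≤ (1/2) * G := hs
    have hTG : G - K₂ * ρ ^ n ≤ T := by
      have := abs_le.mp hE
      linarith [this.1]
    have hT0 : 0 < T := by linarith
    have hxn : (0:ℝ) < x ^ n := by positivity
    have hGval : G = 1 / (D * x ^ n) := by
      rw [hGdef, inv_pow]
      field_simp
    have hGinv : G⁻¹ = D * x ^ n := by
      rw [hGval]
      field_simp
    have heq : T⁻¹ - D * x ^ n = (G - T) / (T * G) := by
      rw [← hGinv, inv_sub_inv hT0.ne' hG0.ne', mul_comm]
    rw [Real.norm_eq_abs, heq, abs_div, abs_of_pos (mul_pos hT0 hG0)]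
    have hTabs : |G - T| ≤ K₂ * ρ ^ n := by
      rw [abs_sub_comm]; exact hE
    have hTGl : G / 2 * G ≤ T * G := by
      apply mul_le_mul_of_nonneg_right _ hG0.le
      linarith
    calc |G - T| / (T * G) ≤ (K₂ * ρ ^ n) / (G / 2 * G) := by
          apply div_le_div₀ (by positivity) hTabs (by positivity) hTGl
      _ = (2 * K₂ * D ^ 2) * |y| ^ n := by
          rw [hGval, ← hρx2]
          rw [show (ρ * x ^ 2) ^ n = ρ ^ n * (x ^ n * x ^ n) from by
            rw [mul_pow, ← pow_mul, two_mul, pow_add]]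
          field_simp
  · have := tendsto_pow_atTop_nhds_zero_of_abs_lt_one (r := |y|) (by rwa [abs_abs])
    simpa using this.const_mul (2 * K₂ * D ^ 2)


set_option maxHeartbeats 1000000 in
/-- Corollary 3.3: the inverse of the tail sum `Σ_{k=n}^∞ 1/(Σ_{i=0}^t W_{mk+i})` is
asymptotically `(1/(α−1))·(W_{mn+t+1} − W_{mn} − W_{m(n−1)+t+1} + W_{m(n−1)})`. -/
theorem inverse_tail_sum_consecutive (p q a b : ℤ) (α β c₁ c₂ : ℝ)
    (hp : 1 ≤ p)
    (hdisc : 0 < (p : ℝ) ^ 2 + 4 * q)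
    (hcond : (p : ℝ) ^ 2 + 2 * q - 2 < p * Real.sqrt ((p : ℝ) ^ 2 + 4 * q))
    (hα : α = ((p : ℝ) + Real.sqrt ((p : ℝ) ^ 2 + 4 * q)) / 2)
    (hβ : β = ((p : ℝ) - Real.sqrt ((p : ℝ) ^ 2 + 4 * q)) / 2)
    (hc₁ : c₁ = ((b : ℝ) - a * β) / (α - β))
    (hc₂ : c₂ = ((b : ℝ) - a * α) / (α - β))
    (hc₁pos : 0 < c₁)
    (W : ℤ → ℝ) (hW : ∀ n : ℤ, W n = c₁ * α ^ n - c₂ * β ^ n)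
    (m t : ℕ) (hm : 1 ≤ m) (ht : 1 ≤ t) :
    Tendsto (fun n : ℕ =>
      (∑' k : ℕ,
        1 / (∑ i ∈ Finset.range (t + 1), W ((m : ℤ) * (n + k) + i)))⁻¹ -
      (1 / (α - 1)) *
        (W ((m : ℤ) * n + t + 1) - W ((m : ℤ) * n) -
          W ((m : ℤ) * ((n : ℤ) - 1) + t + 1) + W ((m : ℤ) * ((n : ℤ) - 1))))
      atTop (nhds 0) := by
  have hs0 : 0 < Real.sqrt ((p : ℝ) ^ 2 + 4 * q) := Real.sqrt_pos.mpr hdisc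
  have hs2 : Real.sqrt ((p : ℝ) ^ 2 + 4 * q) ^ 2 = (p : ℝ) ^ 2 + 4 * q :=
    Real.sq_sqrt hdisc.le
  by_cases hdeg : p = 1 ∧ q = 0
  · -- degenerate case: α = 1, β = 0
    obtain ⟨hp1, hq0⟩ := hdeg
    subst hp1; subst hq0
    have hsv : Real.sqrt (((1:ℤ) : ℝ) ^ 2 + 4 * ((0:ℤ):ℝ)) = 1 := by
      norm_num
    rw [hsv] at hα hβ
    have hα1 : α = 1 := by rw [hα]; norm_num
    have hβ0 : β = 0 := by rw [hβ]; norm_num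
    apply Tendsto.congr' _ tendsto_const_nhds
    filter_upwards [eventually_ge_atTop 1] with n hn
    have hz : ∀ k i : ℕ, W ((m : ℤ) * ((n:ℤ) + (k:ℤ)) + (i:ℤ)) = c₁ := by
      intro k i
      have hpos : 0 < (m : ℤ) * ((n:ℤ) + (k:ℤ)) + (i:ℤ) := by
        have h1 : 1 ≤ (m : ℤ) := by exact_mod_cast hm
        have h2 : 1 ≤ (n : ℤ) := by exact_mod_cast hn
        have h3 : 0 ≤ (k : ℤ) := Int.natCast_nonneg k
        have h4 : 0 ≤ (i : ℤ) := Int.natCast_nonneg i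
        nlinarith
      rw [hW, hα1, hβ0, one_zpow, zero_zpow _ hpos.ne']
      ring
    have hsum : ∀ k : ℕ, (∑ i ∈ Finset.range (t + 1), W ((m : ℤ) * ((n:ℤ) + (k:ℤ)) + (i:ℤ)))
        = (t + 1 : ℝ) * c₁ := by
      intro k
      rw [Finset.sum_congr rfl (fun i _ => hz k i), Finset.sum_const, Finset.card_range]
      push_cast
      ring
    have hcpos : 0 < ((t:ℝ) + 1) * c₁ := by positivity
    have hns : ¬ Summable (fun _ : ℕ => 1 / (((t:ℝ) + 1) * c₁)) := by
      intro h
      have h0 := h.tendsto_atTop_zero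
      have h1 : (1 / (((t:ℝ) + 1) * c₁)) = 0 :=
        tendsto_nhds_unique tendsto_const_nhds h0
      have : (0:ℝ) < 1 / (((t:ℝ) + 1) * c₁) := by positivity
      linarith [h1 ▸ this]
    have htsum : (∑' k : ℕ, 1 / (∑ i ∈ Finset.range (t + 1),
        W ((m : ℤ) * ((n:ℤ) + (k:ℤ)) + (i:ℤ)))) = 0 := by
      rw [tsum_congr (fun k => by rw [hsum k])]
      exact tsum_eq_zero_of_not_summable (by simpa using hns)
    rw [htsum]
    rw [hα1]
    norm_num
  · -- main case: α > 1
    have hα1 : 1 < α := by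
      rcases lt_or_ge 1 p with hp2 | hp2
      · have h2 : (2:ℝ) ≤ (p:ℝ) := by exact_mod_cast hp2
        rw [hα]; linarith
      · have hp1 : p = 1 := le_antisymm hp2 hp
        have hq1 : 1 ≤ q := by
          have h0 : (0:ℝ) < 1 + 4 * (q:ℝ) := by
            rw [hp1] at hdisc; push_cast at hdisc; linarith
          have h0' : 0 < 1 + 4 * q := by exact_mod_cast h0
          have hq0 : q ≠ 0 := fun h => hdeg ⟨hp1, h⟩
          omega
        have h5 : (5:ℝ) ≤ Real.sqrt ((p : ℝ) ^ 2 + 4 * q) ^ 2 := by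
          rw [hs2, hp1]
          have : (1:ℝ) ≤ (q:ℝ) := by exact_mod_cast hq1
          push_cast
          nlinarith
        have hs1 : 1 < Real.sqrt ((p : ℝ) ^ 2 + 4 * q) := by nlinarith
        have hp1R : (p:ℝ) = 1 := by rw [hp1]; norm_num
        rw [hα]; linarith [hs1, hp1R]
    have hα0 : (0:ℝ) < α := lt_trans one_pos hα1
    have hαne : α - 1 ≠ 0 := sub_ne_zero.mpr (ne_of_gt hα1)
    have hβ1 : |β| < 1 := by
      rw [← sq_lt_one_iff_abs_lt_one]
      rw [hβ]
      nlinarith [hs2, hcond]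
    have hmne : m ≠ 0 := Nat.one_le_iff_ne_zero.mp hm
    have hx : 1 < α ^ m := one_lt_pow₀ hα1 hmne
    have hy : |β ^ m| < 1 := by
      rw [abs_pow]
      exact pow_lt_one₀ (abs_nonneg β) hβ1 hmne
    have hPpos : 0 < ∑ i ∈ Finset.range (t + 1), α ^ i :=
      Finset.sum_pos (fun i _ => pow_pos hα0 i) ⟨0, Finset.mem_range.mpr (Nat.succ_pos t)⟩
    have hA : 0 < c₁ * ∑ i ∈ Finset.range (t + 1), α ^ i := mul_pos hc₁pos hPpos
    have hWn : ∀ j : ℕ, W (j:ℤ) = c₁ * α ^ j - c₂ * β ^ j := by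
      intro j
      rw [hW]
      simp only [zpow_natCast]
    have key : ∀ j : ℕ, (∑ i ∈ Finset.range (t + 1), W ((m:ℤ) * (j:ℤ) + (i:ℤ)))
        = (c₁ * ∑ i ∈ Finset.range (t + 1), α ^ i) * (α ^ m) ^ j
          - (c₂ * ∑ i ∈ Finset.range (t + 1), β ^ i) * (β ^ m) ^ j := by
      intro j
      have hterm : ∀ i ∈ Finset.range (t + 1),
          W ((m:ℤ) * (j:ℤ) + (i:ℤ)) = (c₁ * α ^ (m*j)) * α ^ i - (c₂ * β ^ (m*j)) * β ^ i := by
        intro i _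
        rw [show (m:ℤ) * (j:ℤ) + (i:ℤ) = ((m*j+i : ℕ) : ℤ) by push_cast; ring, hW]
        simp only [zpow_natCast]
        rw [pow_add, pow_add]
        ring
      rw [Finset.sum_congr rfl hterm, Finset.sum_sub_distrib,
        ← Finset.mul_sum, ← Finset.mul_sum, pow_mul, pow_mul]
      ring
    have hP := geom_sum_mul α (t + 1)
    have hPval : (∑ i ∈ Finset.range (t + 1), α ^ i) = (α ^ (t+1) - 1) / (α - 1) := by
      rw [eq_div_iff hαne]
      exact hP
    -- the two tendsto ingredients
    have h1 : Tendsto (fun n : ℕ =>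
        (∑' k : ℕ, 1 / ((c₁ * ∑ i ∈ Finset.range (t + 1), α ^ i) * (α ^ m) ^ ((n+1) + k)
          - (c₂ * ∑ i ∈ Finset.range (t + 1), β ^ i) * (β ^ m) ^ ((n+1) + k)))⁻¹
        - (c₁ * ∑ i ∈ Finset.range (t + 1), α ^ i) * (1 - (α ^ m)⁻¹) * (α ^ m) ^ (n+1))
        atTop (nhds 0) := by
      exact (core_tendsto _ _ _ _ hA hx hy).comp (tendsto_add_atTop_nat 1)
    have h2 : Tendsto (fun n : ℕ =>
        (c₂ * (β ^ (t+1) - 1) / (α - 1) * (β ^ m - 1)) * (β ^ m) ^ n) atTop (nhds 0) := by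
      have := (tendsto_pow_atTop_nhds_zero_of_abs_lt_one hy).const_mul
        (c₂ * (β ^ (t+1) - 1) / (α - 1) * (β ^ m - 1))
      simpa using this
    have h3 := h1.add h2
    rw [add_zero] at h3
    apply (tendsto_add_atTop_iff_nat 1).mp
    refine h3.congr fun n => ?_
    -- pointwise identity
    have htsum : (∑' k : ℕ, 1 / (∑ i ∈ Finset.range (t + 1),
          W ((m : ℤ) * ((((n+1):ℕ):ℤ) + (k:ℤ)) + (i:ℤ))))
        = ∑' k : ℕ, 1 / ((c₁ * ∑ i ∈ Finset.range (t + 1), α ^ i) * (α ^ m) ^ ((n+1) + k)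
          - (c₂ * ∑ i ∈ Finset.range (t + 1), β ^ i) * (β ^ m) ^ ((n+1) + k)) := by
      apply tsum_congr
      intro k
      rw [show (m : ℤ) * ((((n+1):ℕ):ℤ) + (k:ℤ)) = (m:ℤ) * ((((n+1)+k : ℕ)):ℤ) by
        push_cast; ring]
      rw [key ((n+1)+k)]
    have i1 : (m:ℤ) * ((((n+1):ℕ)):ℤ) + (t:ℤ) + 1 = ((m*(n+1) + (t+1) : ℕ) : ℤ) := by
      push_cast; ring
    have i2 : (m:ℤ) * ((((n+1):ℕ)):ℤ) = ((m*(n+1) : ℕ) : ℤ) := by push_cast; ring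
    have i3 : (m:ℤ) * (((((n+1):ℕ)):ℤ) - 1) + (t:ℤ) + 1 = ((m*n + (t+1) : ℕ) : ℤ) := by
      push_cast; ring
    have i4 : (m:ℤ) * (((((n+1):ℕ)):ℤ) - 1) = ((m*n : ℕ) : ℤ) := by push_cast; ring
    simp only [htsum]
    simp only [i1, i3]
    simp only [i2, i4]
    simp only [hWn]
    rw [hPval]
    field_simp
    ring
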